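/- Let t1, t2: Σ* ⇀ Ω* be rational functions which are not adjacent. Then there exist words x, y, z ∈ Σ* and constants c > 0 and k0 ∈ ℕ such that x y^k z ∈ dom(t1) ∩ dom(t2) for all k ∈ ℕ and ‖t1(x y^k z), t2(x y^k z)‖ ≥ c·k for all k ≥ k0. In particular, there is a constant C such that for every k ∈ ℕ there exists a word x ∈ dom(t1) ∩ dom(t2) with |x| ≤ C·(k+1) and ‖t1(x), t2(x)‖ ≥ k. -/

import Mathlib

/-! Common definitions for sliding-window / visibly pushdown formalizations. -/

/-- `γ` grows polynomially: `γ(n) ∈ O(n^k)` for some `k`. -/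
def GrowsPolynomially (γ : ℕ → ℕ) : Prop :=
  ∃ k C : ℕ, ∀ n : ℕ, γ n ≤ C * (n + 1) ^ k

/-- `γ` grows exponentially: there is `c > 1` with `γ(n) ≥ c^n` for infinitely many `n`. -/
def GrowsExponentially (γ : ℕ → ℕ) : Prop :=
  ∃ c : ℝ, 1 < c ∧ ∀ m : ℕ, ∃ n : ℕ, m ≤ n ∧ c ^ n ≤ (γ n : ℝ)

/-- A set of words is suffix-closed. -/
def SuffixClosed {α : Type} (X : Set (List α)) : Prop :=
  ∀ x ∈ X, ∀ s : List α, s <:+ x → s ∈ X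

/-- Domain of a partial function presented with `Option`. -/
def pdom {α β : Type} (t : List α → Option β) : Set (List α) := {x | t x ≠ none}

/-- The `t`-growth of `X`: the number of values of `t` on words of `X` of length at most `n`. -/
noncomputable def growthOf {α : Type} {Y : Type} (t : List α → Y) (X : Set (List α)) (n : ℕ) : ℕ :=
  (t '' {x | x ∈ X ∧ x.length ≤ n}).ncard

/-- Growth of a language: number of its words of length at most `n`. -/
noncomputable def langGrowth {β : Type} (L : Set (List β)) (n : ℕ) : ℕ :=
  {y | y ∈ L ∧ y.length ≤ n}.ncard

/-- Suffix expansion of a (total or partial) function: the tuple of values on all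
nonempty suffixes `a₁⋯aₙ, a₂⋯aₙ, …, aₙ` of the input. -/
def cev {α : Type} {Y : Type} (t : List α → Y) (x : List α) : List Y :=
  x.tails.dropLast.map t

/-- Image of `X` under the partial function `t`. -/
def optImage {α β : Type} (t : List α → Option β) (X : Set (List α)) : Set β :=
  {y | ∃ x ∈ X, t x = some y}

/-- A language is bounded if it is contained in `w₁* w₂* ⋯ w_k*`. -/
def BoundedLang {β : Type} (L : Set (List β)) : Prop :=
  ∃ ws : List (List β), ∀ x ∈ L, ∃ ms : List ℕ, ms.length = ws.length ∧
    x = (List.zipWith (fun (w : List β) (m : ℕ) => (List.replicate m w).flatten) ws ms).flatten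

/-- `{u,v}*`: all concatenations of copies of `u` and `v`. -/
def UVStar {α : Type} (u v : List α) : Set (List α) :=
  {w | ∃ l : List (List α), (∀ p ∈ l, p = u ∨ p = v) ∧ w = l.flatten}

/-- `{u,v}^{≤ n}`: concatenations of at most `n` words, each equal to `u` or `v`. -/
def UVPow {α : Type} (u v : List α) (n : ℕ) : Set (List α) :=
  {w | ∃ l : List (List α), (∀ p ∈ l, p = u ∨ p = v) ∧ l.length ≤ n ∧ w = l.flatten}

/-- The set `{u₂,v₂}{u,v}* Z`. -/
def FoolingSet {α : Type} (u₂ v₂ u v : List α) (Z : Set (List α)) : Set (List α) :=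
  {x | ∃ a w z, (a = u₂ ∨ a = v₂) ∧ w ∈ UVStar u v ∧ z ∈ Z ∧ x = a ++ (w ++ z)}

/-- Linear fooling scheme for a partial function `t`. -/
def IsLinearFoolingScheme {α Y : Type} (t : List α → Option Y)
    (u₂ v₂ u v : List α) (Z : Set (List α)) : Prop :=
  u₂ <:+ u ∧ v₂ <:+ v ∧ u₂.length = v₂.length ∧
  FoolingSet u₂ v₂ u v Z ⊆ pdom t ∧
  ∃ C : ℕ, ∀ n : ℕ, ∃ z ∈ Z, z.length ≤ C * (n + 1) ∧
    ∀ w ∈ UVPow u v n, t (u₂ ++ (w ++ z)) ≠ t (v₂ ++ (w ++ z))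

/-- `X` contains a linear fooling set for `t`. -/
def ContainsLinearFoolingSet {α Y : Type} (t : List α → Option Y) (X : Set (List α)) : Prop :=
  ∃ u₂ v₂ u v Z, IsLinearFoolingScheme t u₂ v₂ u v Z ∧ FoolingSet u₂ v₂ u v Z ⊆ X

/-! ### Transducers and rational functions -/

/-- A finite-state transducer over `(α, β)` with terminal output function. -/
structure Transducer (α β : Type) where
  Q : Type
  finQ : Fintype Q
  I : Set Q
  F : Set Q
  Δ : Set (Q × List α × List β × Q)
  finΔ : Δ.Finite
  o : Q → List β

namespace Transducer

variable {α β : Type}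

/-- A run from `p` to `r` with input `x` and output `y`. -/
inductive Run (A : Transducer α β) : A.Q → List α → List β → A.Q → Prop
  | nil (q : A.Q) : Run A q [] [] q
  | cons {p q r : A.Q} {x₁ x : List α} {y₁ y : List β} :
      (p, x₁, y₁, q) ∈ A.Δ → Run A q x y r → Run A p (x₁ ++ x) (y₁ ++ y) r

/-- The transduction defined by a transducer. -/
def T (A : Transducer α β) : Set (List α × List β) :=
  {p | ∃ q₀ q y, q₀ ∈ A.I ∧ q ∈ A.F ∧ A.Run q₀ p.1 y q ∧ p.2 = y ++ A.o q}

end Transducer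

/-- A partial function is rational if its graph is the transduction of some transducer. -/
def IsRationalFun {α β : Type} (t : List α → Option (List β)) : Prop :=
  ∃ A : Transducer α β, ∀ x y, t x = some y ↔ (x, y) ∈ A.T

/-! ### Right congruences, suffix expansions, critical tuples -/

/-- A right congruence: an equivalence relation compatible with appending on the right. -/
def IsRightCongruence {α : Type} (r : List α → List α → Prop) : Prop :=
  Equivalence r ∧ ∀ x y z : List α, r x y → r (x ++ z) (y ++ z)

/-- Suffix expansion of a relation: words of the same length whose corresponding
nonempty suffixes are all related. -/
def SuffixExpansion {α : Type} (r : List α → List α → Prop) (x y : List α) : Prop :=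
  x.length = y.length ∧ ∀ i < x.length, r (x.drop i) (y.drop i)

/-- Number of `r`-classes of words of length at most `n`. -/
noncomputable def classCount {α : Type} (r : List α → List α → Prop) (n : ℕ) : ℕ :=
  Set.ncard {C : Set (List α) | ∃ x : List α, x.length ≤ n ∧ C = {y | r x y}}

/-- A relation has finite index if it has finitely many classes. -/
def FiniteIndex {α : Type} (r : List α → List α → Prop) : Prop :=
  Set.Finite {C : Set (List α) | ∃ x : List α, C = {y | r x y}}

/-- Critical tuple in a right congruence. -/
def IsCriticalTuple {α : Type} (r : List α → List α → Prop) (u₂ v₂ u v : List α) : Prop :=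
  1 ≤ u₂.length ∧ u₂.length = v₂.length ∧ u₂ <:+ u ∧ v₂ <:+ v ∧
  ∀ w ∈ UVStar u v, ¬ r (u₂ ++ w) (v₂ ++ w)

/-- The Myhill–Nerode right congruence of a language. -/
def MNrel {α : Type} (L : Set (List α)) (x y : List α) : Prop :=
  ∀ z : List α, x ++ z ∈ L ↔ y ++ z ∈ L

/-! ### Suffix distance and the canonical right congruence of a rational function -/

/-- Longest common prefix. -/
def cpre {β : Type} [DecidableEq β] : List β → List β → List β
  | a :: x, b :: y => if a = b then a :: cpre x y else []
  | _, _ => []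

/-- `‖x,y‖ = |x| + |y| − 2|x ∧ y|`, where `x ∧ y` is the longest common suffix. -/
def suffDist {β : Type} [DecidableEq β] (x y : List β) : ℕ :=
  x.length + y.length - 2 * (cpre x.reverse y.reverse).length

/-- Value of a partial function (defaulting to the empty word off the domain). -/
def pval {α β : Type} (t : List α → Option (List β)) (x : List α) : List β :=
  (t x).getD []

/-- The right congruence `R_t` of Reutenauer–Schützenberger. -/
def Rt {α β : Type} [DecidableEq β] (t : List α → Option (List β)) (u v : List α) : Prop :=
  (∀ z : List α, u ++ z ∈ pdom t ↔ v ++ z ∈ pdom t) ∧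
  Set.Finite {d : ℕ | ∃ w : List α, u ++ w ∈ pdom t ∧ v ++ w ∈ pdom t ∧
      d = suffDist (pval t (u ++ w)) (pval t (v ++ w))}

/-- Two partial functions are adjacent. -/
def Adjacent {α β : Type} [DecidableEq β] (t₁ t₂ : List α → Option (List β)) : Prop :=
  Set.Finite {d : ℕ | ∃ w : List α, w ∈ pdom t₁ ∧ w ∈ pdom t₂ ∧
      d = suffDist (pval t₁ w) (pval t₂ w)}

/-! ### Visibly pushdown automata -/

/-- Kinds of letters of a pushdown alphabet. -/
inductive VPKind : Type
  | call : VPKind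
  | ret : VPKind
  | intern : VPKind
deriving DecidableEq

/-- A visibly pushdown automaton over the pushdown alphabet determined by `pa`.
The bottom-of-stack symbol `⊥` is represented implicitly by the empty stack. -/
structure VPA (α : Type) (pa : α → VPKind) where
  Q : Type
  finQ : Fintype Q
  Γ : Type
  finΓ : Fintype Γ
  q₀ : Q
  F : Set Q
  δc : Q → α → Γ × Q
  δr : Q → α → Option Γ → Q
  δi : Q → α → Q

namespace VPA

variable {α : Type} {pa : α → VPKind}

/-- One step of the VPA on a configuration (stack with top at the head, state). -/
def step (A : VPA α pa) (c : List A.Γ × A.Q) (a : α) : List A.Γ × A.Q :=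
  match pa a with
  | VPKind.call => ((A.δc c.2 a).1 :: c.1, (A.δc c.2 a).2)
  | VPKind.intern => (c.1, A.δi c.2 a)
  | VPKind.ret =>
    match c.1 with
    | [] => ([], A.δr c.2 a none)
    | γ :: st => (st, A.δr c.2 a (some γ))

/-- Extended transition function on words. -/
def run (A : VPA α pa) (c : List A.Γ × A.Q) (w : List α) : List A.Γ × A.Q :=
  w.foldl A.step c

/-- The language accepted by a VPA (from the initial configuration `⊥q₀`). -/
def acceptsLang (A : VPA α pa) : Set (List α) :=
  {w | (A.run ([], A.q₀) w).2 ∈ A.F}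

/-- Language accepted from a configuration. -/
def AccLang (A : VPA α pa) (c : List A.Γ × A.Q) : Set (List α) :=
  {w | (A.run c w).2 ∈ A.F}

/-- The reachable configurations. -/
def rConf (A : VPA α pa) : Set (List A.Γ × A.Q) :=
  Set.range (fun w => A.run ([], A.q₀) w)

end VPA

/-- A language is a visibly pushdown language over the pushdown alphabet `pa`. -/
def IsVPL {α : Type} (pa : α → VPKind) (L : Set (List α)) : Prop :=
  ∃ A : VPA α pa, L = A.acceptsLang

/-- Well-matched words over a pushdown alphabet. -/
inductive WellMatched {α : Type} (pa : α → VPKind) : List α → Prop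
  | nil : WellMatched pa []
  | intern (a : α) : pa a = VPKind.intern → WellMatched pa [a]
  | append {u v : List α} : WellMatched pa u → WellMatched pa v → WellMatched pa (u ++ v)
  | wrap {w : List α} {a b : α} : WellMatched pa w → pa a = VPKind.call → pa b = VPKind.ret →
      WellMatched pa (a :: (w ++ [b]))

/-- Descending words: concatenations of well-matched words and return letters. -/
def Descending {α : Type} (pa : α → VPKind) (w : List α) : Prop :=
  ∃ l : List (List α),
    (∀ p ∈ l, WellMatched pa p ∨ ∃ b : α, pa b = VPKind.ret ∧ p = [b]) ∧ w = l.flatten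

/-- Length-lexicographic order on configurations `⊥αq` (stacks compared bottom-first). -/
def ConfLe {Q Γ : Type} (ltQ : LinearOrder Q) (ltΓ : LinearOrder Γ)
    (c d : List Γ × Q) : Prop :=
  c.1.length < d.1.length ∨
    (c.1.length = d.1.length ∧
      (List.Lex ltΓ.lt c.1.reverse d.1.reverse ∨ (c.1 = d.1 ∧ ltQ.le c.2 d.2)))

/-- `rep` chooses from each equivalence class of reachable configurations the
length-lexicographically least representative. -/
def IsRepFun {α : Type} {pa : α → VPKind} (A : VPA α pa)
    (ltQ : LinearOrder A.Q) (ltΓ : LinearOrder A.Γ)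
    (rep : List A.Γ × A.Q → List A.Γ × A.Q) : Prop :=
  ∀ c ∈ A.rConf, rep c ∈ A.rConf ∧ A.AccLang (rep c) = A.AccLang c ∧
    ∀ c' ∈ A.rConf, A.AccLang c' = A.AccLang c → ConfLe ltQ ltΓ (rep c) c'

/-- `ν_A(w)`: the representative of the configuration reached on `w`. -/
def nuA {α : Type} {pa : α → VPKind} (A : VPA α pa)
    (rep : List A.Γ × A.Q → List A.Γ × A.Q) (w : List α) : List A.Γ × A.Q :=
  rep (A.run ([], A.q₀) w)

/-- `σ₀(w)`: the states representing the Myhill–Nerode classes of the nonempty suffixes. -/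
def sigma0 {α : Type} {pa : α → VPKind} (A : VPA α pa)
    (rep : List A.Γ × A.Q → List A.Γ × A.Q) (w : List α) : List A.Q :=
  w.tails.dropLast.map fun s => (nuA A rep s).2

/-- `φ(w)`: the state transformation of a well-matched word. -/
def phiVPA {α : Type} {pa : α → VPKind} (A : VPA α pa) (w : List α) : A.Q → A.Q :=
  fun p => (A.run ([], p) w).2

/-- `σ₁(w) = φ(w) q₂ ⋯ qₙ`, a word over the alphabet `Q^Q ∪ Q`. -/
def sigma1 {α : Type} {pa : α → VPKind} (A : VPA α pa)
    (rep : List A.Γ × A.Q → List A.Γ × A.Q) (w : List α) : List ((A.Q → A.Q) ⊕ A.Q) :=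
  Sum.inl (phiVPA A w) :: ((sigma0 A rep w).tail.map Sum.inr)

/-! ### Real-time right transducers -/

/-- A real-time right transducer (reads its input from right to left). -/
structure RightTransducer (α β : Type) where
  Q : Type
  finQ : Fintype Q
  F : Set Q
  I : Set Q
  Δ : Set (Q × α × List β × Q)
  finΔ : Δ.Finite
  o : Q → List β

namespace RightTransducer

variable {α β : Type}

/-- Input word of a sequence of transitions. -/
def inputOf {Q : Type} (ts : List (Q × α × List β × Q)) : List α :=
  ts.map fun tr => tr.2.1

/-- Output word of a sequence of transitions. -/
def outputOf {Q : Type} (ts : List (Q × α × List β × Q)) : List β :=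
  (ts.map fun tr => tr.2.2.1).flatten

/-- `IsRunFrom A q ts p`: `ts` is a run on its input from the (rightmost) state `p`
to the (leftmost) state `q`; the transitions are listed left to right. -/
def IsRunFrom (A : RightTransducer α β) : A.Q → List (A.Q × α × List β × A.Q) → A.Q → Prop
  | q, [], p => q = p
  | q, tr :: ts, p => tr ∈ A.Δ ∧ tr.1 = q ∧ IsRunFrom A tr.2.2.2 ts p

/-- There is a run on `w` from `p` (right) to `q` (left). -/
def RunOn (A : RightTransducer α β) (q : A.Q) (w : List α) (p : A.Q) : Prop :=
  ∃ ts, A.IsRunFrom q ts p ∧ inputOf ts = w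

/-- `q ⪯ p`: there is a run from `p` to `q`. -/
def Below (A : RightTransducer α β) (q p : A.Q) : Prop :=
  ∃ w, A.RunOn q w p

/-- The partial function defined by a right transducer. -/
def Defines (A : RightTransducer α β) (t : List α → Option (List β)) : Prop :=
  ∀ x y, t x = some y ↔ ∃ p q ts, p ∈ A.F ∧ q ∈ A.I ∧ A.IsRunFrom p ts q ∧
    inputOf ts = x ∧ y = A.o p ++ outputOf ts

/-- Every state occurs on some initial accepting run. -/
def Trim (A : RightTransducer α β) : Prop :=
  ∀ s : A.Q, ∃ p q ts₁ ts₂, p ∈ A.F ∧ q ∈ A.I ∧ A.IsRunFrom p ts₁ s ∧ A.IsRunFrom s ts₂ q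

/-- Every input word has at most one initial accepting run. -/
def Unambiguous (A : RightTransducer α β) : Prop :=
  ∀ p p' q q' ts ts', p ∈ A.F → p' ∈ A.F → q ∈ A.I → q' ∈ A.I →
    A.IsRunFrom p ts q → A.IsRunFrom p' ts' q' → inputOf ts = inputOf ts' →
    p = p' ∧ ts = ts'

/-- `w` is guarded by `p`: some run on `w` from `p` stays in the SCC of `p`. -/
def Guarded (A : RightTransducer α β) (p : A.Q) (w : List α) : Prop :=
  ∃ q', A.RunOn q' w p ∧ A.Below p q'

/-- The transducer is well-behaved: the terminal outputs of guarded accepting runs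
from the same state on words of equal length coincide. -/
def WellBehaved (A : RightTransducer α β) : Prop :=
  ∀ (p q q' : A.Q) ts ts', q ∈ A.F → q' ∈ A.F →
    A.IsRunFrom q ts p → A.IsRunFrom q' ts' p →
    A.Guarded p (inputOf ts) → A.Guarded p (inputOf ts') →
    (inputOf ts).length = (inputOf ts').length →
    A.o q ++ outputOf ts = A.o q' ++ outputOf ts'

end RightTransducer

/-! ### The Parikh-like map Ψ -/

/-- `Ψ(w)`: each letter of `w` paired with its position counted from the right (1-based). -/
def Psi {α : Type} (w : List α) : Set (α × ℕ) :=
  {p | ∃ i : ℕ, w[i]? = some p.1 ∧ p.2 = w.length - i}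

/-- `Ψ(L) = ⋃_{w ∈ L} Ψ(w)`. -/
def PsiL {α : Type} (L : Set (List α)) : Set (α × ℕ) :=
  ⋃ w ∈ L, Psi w

/-! ### Auxiliary word combinatorics for statement12 -/

namespace Stmt12Aux

open List

/-- `k`-fold concatenation of the word `b`. -/
def pw {γ : Type} (b : List γ) (k : ℕ) : List γ := (List.replicate k b).flatten

lemma pw_def {γ : Type} (b : List γ) (k : ℕ) : pw b k = (List.replicate k b).flatten := rfl

lemma pw_zero {γ : Type} (b : List γ) : pw b 0 = [] := rfl

lemma pw_succ {γ : Type} (b : List γ) (k : ℕ) : pw b (k+1) = b ++ pw b k := by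
  rw [pw_def, List.replicate_succ, List.flatten_cons, pw_def]

lemma pw_succ' {γ : Type} (b : List γ) (k : ℕ) : pw b (k+1) = pw b k ++ b := by
  rw [pw_def, List.replicate_succ', List.flatten_append, pw_def]
  simp

lemma pw_one {γ : Type} (b : List γ) : pw b 1 = b := by
  rw [pw_succ, pw_zero, List.append_nil]

lemma pw_add {γ : Type} (b : List γ) (m n : ℕ) : pw b (m+n) = pw b m ++ pw b n := by
  rw [pw_def, List.replicate_add, List.flatten_append, pw_def, pw_def]

lemma length_pw {γ : Type} (b : List γ) (k : ℕ) : (pw b k).length = k * b.length := by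
  induction k with
  | zero => simp [pw_zero]
  | succ k ih => rw [pw_succ]; simp [ih]; ring

lemma pw_nil {γ : Type} (k : ℕ) : pw ([] : List γ) k = [] := by
  induction k with
  | zero => rfl
  | succ k ih => rw [pw_succ]; simpa using ih

lemma pw_reverse {γ : Type} (b : List γ) (k : ℕ) : (pw b k).reverse = pw b.reverse k := by
  induction k with
  | zero => rfl
  | succ k ih => rw [pw_succ, pw_succ']; simp [ih]

lemma pw_shift {γ : Type} (u v : List γ) (k : ℕ) :
    pw (u ++ v) k ++ u = u ++ pw (v ++ u) k := by
  induction k with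
  | zero => simp [pw_zero]
  | succ k ih =>
    rw [pw_succ, pw_succ, List.append_assoc, List.append_assoc, ih]
    simp [List.append_assoc]

section cpre

variable {β : Type} [DecidableEq β]

lemma cpre_nil_left (y : List β) : cpre [] y = [] := by cases y <;> rfl

lemma cpre_nil_right (x : List β) : cpre x [] = [] := by cases x <;> rfl

lemma cpre_cons (a b : β) (x y : List β) :
    cpre (a :: x) (b :: y) = if a = b then a :: cpre x y else [] := rfl

lemma cpre_comm (x y : List β) : cpre x y = cpre y x := by
  induction x generalizing y with
  | nil => rw [cpre_nil_left, cpre_nil_right]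
  | cons a x ih =>
    cases y with
    | nil => rw [cpre_nil_left, cpre_nil_right]
    | cons b y =>
      rw [cpre_cons, cpre_cons]
      rcases eq_or_ne a b with h | h
      · subst h; simp [ih]
      · simp [h, Ne.symm h]

lemma length_cpre_le_left (x y : List β) : (cpre x y).length ≤ x.length := by
  induction x generalizing y with
  | nil => simp [cpre_nil_left]
  | cons a x ih =>
    cases y with
    | nil => simp [cpre_nil_right]
    | cons b y =>
      rw [cpre_cons]
      split
      · simpa using ih y
      · simp

lemma length_cpre_le_right (x y : List β) : (cpre x y).length ≤ y.length := by
  rw [cpre_comm]; exact length_cpre_le_left y x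

lemma cpre_prefix_left (x y : List β) : cpre x y <+: x := by
  induction x generalizing y with
  | nil => simp [cpre_nil_left]
  | cons a x ih =>
    cases y with
    | nil => simp [cpre_nil_right]
    | cons b y =>
      rw [cpre_cons]
      split
      · exact List.cons_prefix_cons.mpr ⟨rfl, ih y⟩
      · simp

lemma cpre_prefix_right (x y : List β) : cpre x y <+: y := by
  rw [cpre_comm]; exact cpre_prefix_left y x

lemma take_prefix_eq {u x : List β} (h : u <+: x) {m : ℕ} (hm : m ≤ u.length) :
    x.take m = u.take m := by
  obtain ⟨s, rfl⟩ := h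
  exact List.take_append_of_le_length hm

lemma getElem?_prefix_eq {u x : List β} (h : u <+: x) {m : ℕ} (hm : m < u.length) :
    x[m]? = u[m]? := by
  obtain ⟨s, rfl⟩ := h
  exact List.getElem?_append_left hm

lemma take_eq_take_of_le_cpre {x y : List β} {m : ℕ} (h : m ≤ (cpre x y).length) :
    x.take m = y.take m := by
  rw [take_prefix_eq (cpre_prefix_left x y) h, take_prefix_eq (cpre_prefix_right x y) h]

lemma le_cpre_of_take_eq {x y : List β} {m : ℕ} (h1 : m ≤ x.length) (h2 : m ≤ y.length)
    (h : x.take m = y.take m) : m ≤ (cpre x y).length := by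
  induction x generalizing y m with
  | nil => simp at h1; omega
  | cons a x ih =>
    cases y with
    | nil => simp at h2; omega
    | cons b y =>
      cases m with
      | zero => simp
      | succ m =>
        rw [List.take_succ_cons, List.take_succ_cons] at h
        have hab : a = b := List.head_eq_of_cons_eq h
        have htail : x.take m = y.take m := List.tail_eq_of_cons_eq h
        subst hab
        rw [cpre_cons, if_pos rfl]
        simp only [List.length_cons, Nat.succ_le_succ_iff]
        exact ih (by simpa using h1) (by simpa using h2) htail

lemma getElem?_eq_of_lt_cpre {x y : List β} {m : ℕ} (h : m < (cpre x y).length) :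
    x[m]? = y[m]? := by
  have ht := take_eq_take_of_le_cpre (x := x) (y := y) (m := m+1) h
  have h1 : (x.take (m+1))[m]? = (y.take (m+1))[m]? := by rw [ht]
  rwa [List.getElem?_take, List.getElem?_take, if_pos (Nat.lt_succ_self m),
    if_pos (Nat.lt_succ_self m)] at h1

lemma cpre_le_of_getElem?_ne {x y : List β} {m : ℕ} (h : x[m]? ≠ y[m]?) :
    (cpre x y).length ≤ m := by
  by_contra hc
  exact h (getElem?_eq_of_lt_cpre (by omega))

lemma cpre_getElem?_ne {x y : List β} (h1 : (cpre x y).length < x.length)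
    (h2 : (cpre x y).length < y.length) :
    x[(cpre x y).length]? ≠ y[(cpre x y).length]? := by
  induction x generalizing y with
  | nil => simp at h1
  | cons a x ih =>
    cases y with
    | nil => simp at h2
    | cons b y =>
      rw [cpre_cons] at h1 h2 ⊢
      by_cases hab : a = b
      · subst hab
        rw [if_pos rfl] at h1 h2 ⊢
        simpa using ih (by simpa using h1) (by simpa using h2)
      · rw [if_neg hab] at h1 h2 ⊢
        simpa using hab

lemma cpre_append_common (u s t : List β) : cpre (u ++ s) (u ++ t) = u ++ cpre s t := by
  induction u with
  | nil => simp
  | cons a u ih => simpa [cpre_cons] using ih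

/-- Prefix distance. -/
def pdist (x y : List β) : ℕ := x.length + y.length - 2 * (cpre x y).length

lemma suffDist_eq_pdist (x y : List β) : suffDist x y = pdist x.reverse y.reverse := by
  simp [suffDist, pdist]

lemma pdist_comm (x y : List β) : pdist x y = pdist y x := by
  rw [pdist, pdist, cpre_comm, Nat.add_comm]

end cpre

end Stmt12Aux

namespace Stmt12Aux

open List

variable {β : Type} [DecidableEq β]

lemma take_split {γ : Type} (l : List γ) {n m : ℕ} (h : n ≤ m) :
    l.take m = l.take n ++ (l.take m).drop n := by
  conv_lhs => rw [← List.take_append_drop n (l.take m)]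
  rw [List.take_take, Nat.min_eq_left h]

lemma core_grow {p1 q1 r1 p2 q2 r2 : List β} (h : q1.length < q2.length) :
    ∃ A : ℕ, ∀ k, k ≤ pdist (p1 ++ pw q1 (k+A) ++ r1) (p2 ++ pw q2 (k+A) ++ r2) := by
  refine ⟨p1.length + r1.length, fun k => ?_⟩
  set m := k + (p1.length + r1.length) with hm
  have hL := length_cpre_le_left (p1 ++ pw q1 m ++ r1) (p2 ++ pw q2 m ++ r2)
  have hlen1 : (p1 ++ pw q1 m ++ r1).length = p1.length + m * q1.length + r1.length := by
    simp [length_pw] <;> ring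
  have hlen2 : (p2 ++ pw q2 m ++ r2).length = p2.length + m * q2.length + r2.length := by
    simp [length_pw] <;> ring
  have hmul : m * q1.length + m ≤ m * q2.length := by
    calc m * q1.length + m = m * (q1.length + 1) := by ring
    _ ≤ m * q2.length := Nat.mul_le_mul_left m h
  simp only [pdist]
  omega

lemma core_const {p1 q1 r1 p2 q2 r2 : List β} (hq : q1.length = q2.length)
    (hg : 1 ≤ q1.length) (hp : p1.length ≤ p2.length)
    (hL : ∀ k, p1.length + k * q1.length ≤
      (cpre (p1 ++ pw q1 k ++ r1) (p2 ++ pw q2 k ++ r2)).length) :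
    ∀ k, pdist (p1 ++ pw q1 k ++ r1) (p2 ++ pw q2 k ++ r2)
       = pdist (p1 ++ pw q1 0 ++ r1) (p2 ++ pw q2 0 ++ r2) := by
  set g := q1.length with hgdef
  have hm1 : ∀ k, (p1 ++ pw q1 k).length = p1.length + k * g := by
    intro k; simp [length_pw, hgdef] <;> ring
  have hm2 : ∀ k, (p2 ++ pw q2 k).length = p2.length + k * g := by
    intro k; simp [length_pw, ← hq, hgdef] <;> ring
  have htl : ∀ k, (p1 ++ pw q1 k ++ r1).take (p1.length + k * g) = p1 ++ pw q1 k :=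
    fun k => List.take_left' (hm1 k)
  have htake : ∀ k, (p1 ++ pw q1 k ++ r1).take (p1.length + k * g)
      = (p2 ++ pw q2 k ++ r2).take (p1.length + k * g) :=
    fun k => take_eq_take_of_le_cpre (hL k)
  have hprefix0 : ∀ k, (p1 ++ pw q1 k) <+: (p2 ++ pw q2 k ++ r2) := by
    intro k
    rw [List.prefix_iff_eq_take, hm1 k, ← htake k, htl k]
  set K := p2.length with hK
  set Δ := p2.length - p1.length with hΔ
  set T := (pw q1 K).take Δ with hT
  have htail : ∀ k, (p2 ++ pw q2 k) = (p1 ++ pw q1 k) ++ T := by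
    intro k
    have hKg : K ≤ K * g := Nat.le_mul_of_pos_right K hg
    have hadd : (k + K) * g = k * g + K * g := Nat.add_mul k K g
    have h1 : (p2 ++ pw q2 k) <+: (p1 ++ pw q1 (k + K)) := by
      apply List.prefix_of_prefix_length_le ?_ (hprefix0 (k + K)) ?_
      · exact ⟨pw q2 K ++ r2, by rw [pw_add]; simp [List.append_assoc]⟩
      · rw [hm1, hm2]; omega
    have h2 : p2 ++ pw q2 k = (p1 ++ pw q1 (k+K)).take (p2.length + k * g) := by
      rw [← hm2 k]; exact List.prefix_iff_eq_take.mp h1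
    have hX : p1 ++ pw q1 (k+K) = (p1 ++ pw q1 k) ++ pw q1 K := by
      rw [pw_add]; simp [List.append_assoc]
    have h3 : (p1 ++ pw q1 (k+K)).drop (p1.length + k * g) = pw q1 K := by
      rw [hX]; exact List.drop_left' (hm1 k)
    have h4 := take_split (p1 ++ pw q1 (k+K))
      (show p1.length + k * g ≤ p2.length + k * g by omega)
    have h5 : (p1 ++ pw q1 (k+K)).take (p1.length + k * g) = p1 ++ pw q1 k := by
      rw [hX]; exact List.take_left' (hm1 k)
    have h6 : p2.length + k * g - (p1.length + k * g) = Δ := by omega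
    rw [h2, h4, h5, List.drop_take, h6, h3]
  have hdec2 : ∀ k, (p2 ++ pw q2 k ++ r2) = (p1 ++ pw q1 k) ++ (T ++ r2) := by
    intro k
    calc p2 ++ pw q2 k ++ r2 = ((p1 ++ pw q1 k) ++ T) ++ r2 := by rw [htail k]
    _ = _ := by simp [List.append_assoc]
  have hcpre : ∀ k, cpre (p1 ++ pw q1 k ++ r1) (p2 ++ pw q2 k ++ r2)
      = (p1 ++ pw q1 k) ++ cpre r1 (T ++ r2) := by
    intro k
    rw [hdec2 k, show p1 ++ pw q1 k ++ r1 = (p1 ++ pw q1 k) ++ r1 from rfl]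
    exact cpre_append_common _ _ _
  have hb1 : (cpre r1 (T ++ r2)).length ≤ r1.length := length_cpre_le_left _ _
  have hb2 : (cpre r1 (T ++ r2)).length ≤ T.length + r2.length := by
    have := length_cpre_le_right r1 (T ++ r2); simpa using this
  have e1 : ∀ k, (p1 ++ pw q1 k ++ r1).length = p1.length + k * g + r1.length := by
    intro k; simp [length_pw, hgdef] <;> ring
  have e2 : ∀ k, (p2 ++ pw q2 k ++ r2).length = p1.length + k * g + (T.length + r2.length) := by
    intro k; rw [hdec2 k]; simp [length_pw, hgdef] <;> ring
  have c1 : ∀ k, (cpre (p1 ++ pw q1 k ++ r1) (p2 ++ pw q2 k ++ r2)).length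
      = p1.length + k * g + (cpre r1 (T ++ r2)).length := by
    intro k; rw [hcpre k]; simp [length_pw, hgdef] <;> ring
  intro k
  have e1k := e1 k; have e10 := e1 0; have e2k := e2 k; have e20 := e2 0
  have c1k := c1 k; have c10 := c1 0
  simp only [pdist]
  omega

lemma core (p1 q1 r1 p2 q2 r2 : List β) :
    (∀ k, pdist (p1 ++ pw q1 k ++ r1) (p2 ++ pw q2 k ++ r2)
        = pdist (p1 ++ pw q1 0 ++ r1) (p2 ++ pw q2 0 ++ r2)) ∨
    (∃ A : ℕ, ∀ k, k ≤ pdist (p1 ++ pw q1 (k+A) ++ r1) (p2 ++ pw q2 (k+A) ++ r2)) := by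
  rcases Nat.lt_trichotomy q1.length q2.length with hlt | heq | hgt
  · right; exact core_grow hlt
  · by_cases hg0 : q1.length = 0
    · left
      have e1 : q1 = [] := List.length_eq_zero_iff.mp hg0
      have e2 : q2 = [] := List.length_eq_zero_iff.mp (by omega)
      subst e1; subst e2
      intro k; rw [pw_nil, pw_nil]
    · have hg : 1 ≤ q1.length := by omega
      by_cases hEx : ∃ k0,
          (cpre (p1 ++ pw q1 k0 ++ r1) (p2 ++ pw q2 k0 ++ r2)).length < p1.length + k0 * q1.length ∧
          (cpre (p1 ++ pw q1 k0 ++ r1) (p2 ++ pw q2 k0 ++ r2)).length < p2.length + k0 * q2.length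
      · right
        obtain ⟨k0, hc1, hc2⟩ := hEx
        refine ⟨k0, fun k => ?_⟩
        set L0 := (cpre (p1 ++ pw q1 k0 ++ r1) (p2 ++ pw q2 k0 ++ r2)).length with hL0
        have hmul1 : (k + k0) * q1.length = k * q1.length + k0 * q1.length := Nat.add_mul k k0 _
        have hmul2 : (k + k0) * q2.length = k * q2.length + k0 * q2.length := Nat.add_mul k k0 _
        have hkg : k ≤ k * q1.length := Nat.le_mul_of_pos_right k hg
        have hpre1 : (p1 ++ pw q1 k0) <+: (p1 ++ pw q1 (k + k0) ++ r1) :=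
          ⟨pw q1 k ++ r1, by rw [Nat.add_comm k k0, pw_add]; simp [List.append_assoc]⟩
        have hpre1' : (p1 ++ pw q1 k0) <+: (p1 ++ pw q1 k0 ++ r1) := ⟨r1, rfl⟩
        have hpre2 : (p2 ++ pw q2 k0) <+: (p2 ++ pw q2 (k + k0) ++ r2) :=
          ⟨pw q2 k ++ r2, by rw [Nat.add_comm k k0, pw_add]; simp [List.append_assoc]⟩
        have hpre2' : (p2 ++ pw q2 k0) <+: (p2 ++ pw q2 k0 ++ r2) := ⟨r2, rfl⟩
        have hlen10 : (p1 ++ pw q1 k0).length = p1.length + k0 * q1.length := by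
          simp [length_pw] <;> ring
        have hlen20 : (p2 ++ pw q2 k0).length = p2.length + k0 * q2.length := by
          simp [length_pw] <;> ring
        have hLlt1 : L0 < (p1 ++ pw q1 k0).length := by omega
        have hLlt2 : L0 < (p2 ++ pw q2 k0).length := by omega
        have hfull1 : (p1 ++ pw q1 k0 ++ r1).length = p1.length + k0 * q1.length + r1.length := by
          simp [length_pw] <;> ring
        have hfull2 : (p2 ++ pw q2 k0 ++ r2).length = p2.length + k0 * q2.length + r2.length := by
          simp [length_pw] <;> ring
        have hfull1' : (p1 ++ pw q1 (k+k0) ++ r1).length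
            = p1.length + (k+k0) * q1.length + r1.length := by simp [length_pw] <;> ring
        have hfull2' : (p2 ++ pw q2 (k+k0) ++ r2).length
            = p2.length + (k+k0) * q2.length + r2.length := by simp [length_pw] <;> ring
        have hge : L0 ≤ (cpre (p1 ++ pw q1 (k+k0) ++ r1) (p2 ++ pw q2 (k+k0) ++ r2)).length := by
          apply le_cpre_of_take_eq (by omega) (by omega)
          have t1 : (p1 ++ pw q1 (k+k0) ++ r1).take L0 = (p1 ++ pw q1 k0 ++ r1).take L0 := by
            rw [take_prefix_eq hpre1 (by omega), take_prefix_eq hpre1' (by omega)]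
          have t2 : (p2 ++ pw q2 (k+k0) ++ r2).take L0 = (p2 ++ pw q2 k0 ++ r2).take L0 := by
            rw [take_prefix_eq hpre2 (by omega), take_prefix_eq hpre2' (by omega)]
          rw [t1, t2]
          exact take_eq_take_of_le_cpre (le_refl L0)
        have hle : (cpre (p1 ++ pw q1 (k+k0) ++ r1) (p2 ++ pw q2 (k+k0) ++ r2)).length ≤ L0 := by
          apply cpre_le_of_getElem?_ne
          have g1 : (p1 ++ pw q1 (k+k0) ++ r1)[L0]? = (p1 ++ pw q1 k0 ++ r1)[L0]? := by
            rw [getElem?_prefix_eq hpre1 hLlt1, getElem?_prefix_eq hpre1' hLlt1]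
          have g2 : (p2 ++ pw q2 (k+k0) ++ r2)[L0]? = (p2 ++ pw q2 k0 ++ r2)[L0]? := by
            rw [getElem?_prefix_eq hpre2 hLlt2, getElem?_prefix_eq hpre2' hLlt2]
          rw [g1, g2]
          exact cpre_getElem?_ne (by omega) (by omega)
        simp only [pdist]
        omega
      · left
        push_neg at hEx
        have hdisj : ∀ k,
            p1.length + k * q1.length ≤
              (cpre (p1 ++ pw q1 k ++ r1) (p2 ++ pw q2 k ++ r2)).length ∨
            p2.length + k * q2.length ≤
              (cpre (p1 ++ pw q1 k ++ r1) (p2 ++ pw q2 k ++ r2)).length := by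
          intro k
          rcases Nat.lt_or_ge (cpre (p1 ++ pw q1 k ++ r1) (p2 ++ pw q2 k ++ r2)).length
            (p1.length + k * q1.length) with h | h
          · exact Or.inr (hEx k h)
          · exact Or.inl h
        rcases Nat.le_total p1.length p2.length with hple | hple
        · apply core_const heq hg hple
          intro k
          rcases hdisj k with h | h
          · exact h
          · have hqq : k * q1.length = k * q2.length := by rw [heq]
            omega
        · intro k
          rw [pdist_comm, pdist_comm (p1 ++ pw q1 0 ++ r1)]
          apply core_const heq.symm (by omega) hple _ k
          intro k'
          rw [cpre_comm]
          rcases hdisj k' with h | h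
          · have hqq : k' * q1.length = k' * q2.length := by rw [heq]
            omega
          · exact h
  · right
    obtain ⟨A, hA⟩ := core_grow (p1 := p2) (q1 := q2) (r1 := r2) (p2 := p1) (q2 := q1) (r2 := r1) hgt
    exact ⟨A, fun k => by rw [pdist_comm]; exact hA k⟩

lemma suff_dichotomy (a1 b1 c1 a2 b2 c2 : List β) :
    (∀ k, suffDist (a1 ++ pw b1 k ++ c1) (a2 ++ pw b2 k ++ c2)
        = suffDist (a1 ++ pw b1 0 ++ c1) (a2 ++ pw b2 0 ++ c2)) ∨
    (∃ A : ℕ, ∀ k, k ≤ suffDist (a1 ++ pw b1 (k+A) ++ c1) (a2 ++ pw b2 (k+A) ++ c2)) := by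
  have hrev : ∀ (a b c : List β) (k : ℕ),
      (a ++ pw b k ++ c).reverse = c.reverse ++ pw b.reverse k ++ a.reverse := by
    intro a b c k
    simp [pw_reverse, List.append_assoc]
  rcases core c1.reverse b1.reverse a1.reverse c2.reverse b2.reverse a2.reverse with h | ⟨A, hA⟩
  · left
    intro k
    rw [suffDist_eq_pdist, suffDist_eq_pdist, hrev, hrev, hrev, hrev]
    exact h k
  · right
    exact ⟨A, fun k => by rw [suffDist_eq_pdist, hrev, hrev]; exact hA k⟩

end Stmt12Aux

namespace Stmt12Aux

open List

variable {α β : Type}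

/-- Input word of a transition list. -/
def inps {A : Transducer α β} (ts : List (A.Q × List α × List β × A.Q)) : List α :=
  (ts.map fun tr => tr.2.1).flatten

/-- Output word of a transition list. -/
def outs {A : Transducer α β} (ts : List (A.Q × List α × List β × A.Q)) : List β :=
  (ts.map fun tr => tr.2.2.1).flatten

@[simp] lemma inps_nil {A : Transducer α β} : inps ([] : List (A.Q × List α × List β × A.Q)) = [] := rfl
@[simp] lemma outs_nil {A : Transducer α β} : outs ([] : List (A.Q × List α × List β × A.Q)) = [] := rfl

@[simp] lemma inps_cons {A : Transducer α β} (tr : A.Q × List α × List β × A.Q) (ts) :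
    inps (tr :: ts) = tr.2.1 ++ inps ts := by simp [inps]

@[simp] lemma outs_cons {A : Transducer α β} (tr : A.Q × List α × List β × A.Q) (ts) :
    outs (tr :: ts) = tr.2.2.1 ++ outs ts := by simp [outs]

@[simp] lemma inps_append {A : Transducer α β} (l1 l2 : List (A.Q × List α × List β × A.Q)) :
    inps (l1 ++ l2) = inps l1 ++ inps l2 := by simp [inps]

@[simp] lemma outs_append {A : Transducer α β} (l1 l2 : List (A.Q × List α × List β × A.Q)) :
    outs (l1 ++ l2) = outs l1 ++ outs l2 := by simp [outs]

lemma inps_pw {A : Transducer α β} (l : List (A.Q × List α × List β × A.Q)) (k : ℕ) :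
    inps (pw l k) = pw (inps l) k := by
  induction k with
  | zero => rfl
  | succ k ih => rw [pw_succ, pw_succ, inps_append, ih]

lemma outs_pw {A : Transducer α β} (l : List (A.Q × List α × List β × A.Q)) (k : ℕ) :
    outs (pw l k) = pw (outs l) k := by
  induction k with
  | zero => rfl
  | succ k ih => rw [pw_succ, pw_succ, outs_append, ih]

/-- `ts` is a valid sequence of transitions from `p` to `q`. -/
def IsTrace (A : Transducer α β) : A.Q → List (A.Q × List α × List β × A.Q) → A.Q → Prop
  | p, [], q => p = q
  | p, tr :: ts, q => tr ∈ A.Δ ∧ tr.1 = p ∧ IsTrace A tr.2.2.2 ts q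

@[simp] lemma isTrace_nil {A : Transducer α β} {p q : A.Q} :
    IsTrace A p [] q ↔ p = q := Iff.rfl

@[simp] lemma isTrace_cons {A : Transducer α β} {p q : A.Q} {tr} {ts} :
    IsTrace A p (tr :: ts) q ↔ tr ∈ A.Δ ∧ tr.1 = p ∧ IsTrace A tr.2.2.2 ts q := Iff.rfl

lemma run_of_trace {A : Transducer α β} {p q : A.Q} {ts} (h : IsTrace A p ts q) :
    A.Run p (inps ts) (outs ts) q := by
  induction ts generalizing p with
  | nil => rw [isTrace_nil] at h; subst h; exact Transducer.Run.nil p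
  | cons tr ts ih =>
    obtain ⟨s, xi, yo, tg⟩ := tr
    obtain ⟨hΔ, hp, ht⟩ := h
    simp only at hp
    subst hp
    simpa using Transducer.Run.cons hΔ (ih ht)

lemma trace_of_run {A : Transducer α β} {p q : A.Q} {x y} (h : A.Run p x y q) :
    ∃ ts, IsTrace A p ts q ∧ inps ts = x ∧ outs ts = y := by
  induction h with
  | nil q => exact ⟨[], rfl, rfl, rfl⟩
  | @cons p q r x₁ x y₁ y hΔ hrun ih =>
    obtain ⟨ts, h1, h2, h3⟩ := ih
    exact ⟨(p, x₁, y₁, q) :: ts, ⟨hΔ, rfl, h1⟩, by simp [h2], by simp [h3]⟩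

lemma trace_append {A : Transducer α β} {p q : A.Q} {l1 l2} :
    IsTrace A p (l1 ++ l2) q ↔ ∃ r, IsTrace A p l1 r ∧ IsTrace A r l2 q := by
  induction l1 generalizing p with
  | nil => simp
  | cons tr l1 ih => simp [ih, and_assoc]

lemma trace_pw {A : Transducer α β} {p : A.Q} {l} (h : IsTrace A p l p) (k : ℕ) :
    IsTrace A p (pw l k) p := by
  induction k with
  | zero => rfl
  | succ k ih => rw [pw_succ]; exact trace_append.mpr ⟨p, h, ih⟩

lemma mem_of_split {A : Transducer α β} {q0 qf : A.Q} {ts Ap Bs} {tr}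
    (h : IsTrace A q0 ts qf) (he : ts = Ap ++ tr :: Bs) : tr ∈ A.Δ := by
  rw [he] at h
  obtain ⟨r, -, htr, -⟩ := trace_append.mp h
  exact htr

lemma exists_cut {A : Transducer α β} (ts : List (A.Q × List α × List β × A.Q)) (i : ℕ)
    (h : i < (inps ts).length) :
    ∃ Ap tr Bs d, ts = Ap ++ tr :: Bs ∧ d < tr.2.1.length ∧ i = (inps Ap).length + d := by
  induction ts generalizing i with
  | nil => simp at h
  | cons tr ts ih =>
    by_cases hi : i < tr.2.1.length
    · exact ⟨[], tr, ts, i, rfl, hi, by simp⟩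
    · have h' : i - tr.2.1.length < (inps ts).length := by
        simp at h; omega
      obtain ⟨Ap, tr', Bs, d, he, hd, hidx⟩ := ih _ h'
      refine ⟨tr :: Ap, tr', Bs, d, by rw [he, List.cons_append], hd, ?_⟩
      simp
      omega

lemma prefix_inps_le {A : Transducer α β} {l1 l2 : List (A.Q × List α × List β × A.Q)}
    (h : l1 <+: l2) : (inps l1).length ≤ (inps l2).length := by
  obtain ⟨s, rfl⟩ := h; simp

lemma two_splits {A : Transducer α β} {ts A1 B1 A2 B2 : List (A.Q × List α × List β × A.Q)}
    {t1 t2 : A.Q × List α × List β × A.Q}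
    (h1 : ts = A1 ++ t1 :: B1) (h2 : ts = A2 ++ t2 :: B2)
    (hlt : (inps A1).length < (inps A2).length) :
    ∃ M, A2 = A1 ++ t1 :: M ∧ B1 = M ++ t2 :: B2 := by
  have p1 : A1 ++ [t1] <+: ts := ⟨B1, by simp [h1]⟩
  have p2 : A2 <+: ts := ⟨t2 :: B2, h2.symm⟩
  have hlen : A1.length + 1 ≤ A2.length := by
    by_contra hc
    have hA2A1 : A2 <+: A1 :=
      List.prefix_of_prefix_length_le p2 ⟨t1 :: B1, h1.symm⟩ (by omega)
    exact absurd (prefix_inps_le hA2A1) (by omega)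
  have hpre : A1 ++ [t1] <+: A2 :=
    List.prefix_of_prefix_length_le p1 p2 (by simp; omega)
  obtain ⟨M, hM⟩ := hpre
  have hA2 : A2 = A1 ++ t1 :: M := by rw [← hM]; simp
  refine ⟨M, hA2, ?_⟩
  have heq : A1 ++ t1 :: B1 = A1 ++ t1 :: (M ++ t2 :: B2) := by
    rw [← h1, h2, hA2]; simp
  have := List.append_cancel_left heq
  simpa using this

lemma pump_trace {A : Transducer α β} {q0 qf : A.Q} {Ap M Bs} {tr}
    (h : IsTrace A q0 (Ap ++ tr :: (M ++ tr :: Bs)) qf) (k : ℕ) :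
    IsTrace A q0 (Ap ++ (pw (tr :: M) k ++ tr :: Bs)) qf := by
  obtain ⟨r1, hAp, hΔ, hsrc, h3⟩ := trace_append.mp h
  obtain ⟨r2, hM, hΔ2, hsrc2, h5⟩ := trace_append.mp h3
  have hr : r2 = r1 := hsrc2.symm.trans hsrc
  subst hr
  have hloop : IsTrace A r2 (tr :: M) r2 := ⟨hΔ, hsrc2, hM⟩
  have htail : IsTrace A r2 (tr :: Bs) qf := ⟨hΔ, hsrc2, h5⟩
  exact trace_append.mpr ⟨r2, hAp, trace_append.mpr ⟨r2, trace_pw hloop k, htail⟩⟩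

lemma pump_word_eq {γ : Type} (aw s r m e : List γ) (k : ℕ) :
    aw ++ (pw ((s ++ r) ++ m) k ++ ((s ++ r) ++ e)) =
      (aw ++ s) ++ (pw ((r ++ m) ++ s) k ++ (r ++ e)) := by
  have h := pw_shift s (r ++ m) k
  calc aw ++ (pw ((s ++ r) ++ m) k ++ ((s ++ r) ++ e))
      = aw ++ ((pw (s ++ (r ++ m)) k ++ s) ++ (r ++ e)) := by simp [List.append_assoc]
    _ = aw ++ ((s ++ pw ((r ++ m) ++ s) k) ++ (r ++ e)) := by rw [h]
    _ = (aw ++ s) ++ (pw ((r ++ m) ++ s) k ++ (r ++ e)) := by simp [List.append_assoc]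

end Stmt12Aux

namespace Stmt12Aux

open List

variable {α β : Type}

noncomputable def maxInp (A : Transducer α β) : ℕ :=
  A.finΔ.toFinset.sup fun tr => tr.2.1.length

noncomputable def pumpBound (A1 A2 : Transducer α β) : ℕ :=
  ((A1.finΔ.toFinset ×ˢ Finset.range (maxInp A1 + 1)) ×ˢ
   (A2.finΔ.toFinset ×ˢ Finset.range (maxInp A2 + 1))).card

lemma one_machine {A : Transducer α β} {t : List α → Option (List β)}
    (ht : ∀ x y, t x = some y ↔ (x, y) ∈ A.T)
    {q0 qf : A.Q} (hI : q0 ∈ A.I) (hF : qf ∈ A.F)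
    {ts : List (A.Q × List α × List β × A.Q)} (htr : IsTrace A q0 ts qf)
    {i j : ℕ} (hij : i < j)
    {Ai Aj Bi Bj : List (A.Q × List α × List β × A.Q)} {tr : A.Q × List α × List β × A.Q}
    {d : ℕ}
    (hspi : ts = Ai ++ tr :: Bi) (hspj : ts = Aj ++ tr :: Bj)
    (hd : d < tr.2.1.length)
    (hxi : i = (inps Ai).length + d) (hxj : j = (inps Aj).length + d) :
    ∃ x y z : List α, ∃ a b c : List β, x.length = i ∧ y.length = j - i ∧
      x ++ y ++ z = inps ts ∧
      ∀ k, t (x ++ pw y k ++ z) = some (a ++ pw b k ++ c) := by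
  obtain ⟨M, hAj, hBi⟩ := two_splits hspi hspj (by omega)
  have hsplit : ts = Ai ++ tr :: (M ++ tr :: Bj) := by rw [hspi, hBi]
  set s := tr.2.1.take d with hs
  set r := tr.2.1.drop d with hr
  have hsr : tr.2.1 = s ++ r := (List.take_append_drop d tr.2.1).symm
  have hslen : s.length = d := by rw [hs]; simp; omega
  have hAjlen : (inps Aj).length = (inps Ai).length + (tr.2.1.length + (inps M).length) := by
    rw [hAj]; simp
  have hinps : ∀ k, inps (Ai ++ (pw (tr :: M) k ++ tr :: Bj)) =
      (inps Ai ++ s) ++ (pw ((r ++ inps M) ++ s) k ++ (r ++ inps Bj)) := by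
    intro k
    simp only [inps_append, inps_cons, inps_pw]
    rw [hsr]
    exact pump_word_eq (inps Ai) s r (inps M) (inps Bj) k
  have houts : ∀ k, outs (Ai ++ (pw (tr :: M) k ++ tr :: Bj)) =
      outs Ai ++ (pw (tr.2.2.1 ++ outs M) k ++ (tr.2.2.1 ++ outs Bj)) := by
    intro k
    simp only [outs_append, outs_cons, outs_pw]
  refine ⟨inps Ai ++ s, (r ++ inps M) ++ s, r ++ inps Bj,
    outs Ai, tr.2.2.1 ++ outs M, (tr.2.2.1 ++ outs Bj) ++ A.o qf, ?_, ?_, ?_, ?_⟩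
  · simp [hslen]; omega
  · have hrlen : r.length = tr.2.1.length - d := by rw [hr]; simp
    simp only [List.length_append, hslen, hrlen]
    omega
  · have h1 := hinps 1
    rw [pw_one, pw_one] at h1
    rw [hsplit, show Ai ++ tr :: (M ++ tr :: Bj) = Ai ++ ((tr :: M) ++ tr :: Bj) from by
      rw [List.cons_append]]
    rw [h1]
    simp [List.append_assoc]
  · intro k
    apply (ht _ _).mpr
    refine ⟨q0, qf, outs (Ai ++ (pw (tr :: M) k ++ tr :: Bj)), hI, hF, ?_, ?_⟩
    · have hR := run_of_trace (pump_trace (hsplit ▸ htr) k)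
      rw [hinps k] at hR
      have hassoc : (inps Ai ++ s) ++ (pw ((r ++ inps M) ++ s) k ++ (r ++ inps Bj)) =
          (inps Ai ++ s) ++ pw ((r ++ inps M) ++ s) k ++ (r ++ inps Bj) := by
        simp [List.append_assoc]
      rw [hassoc] at hR
      exact hR
    · show _ = _
      rw [houts k]
      simp [List.append_assoc]

lemma pair_pump (A1 A2 : Transducer α β) (t1 t2 : List α → Option (List β))
    (h1 : ∀ x y, t1 x = some y ↔ (x, y) ∈ A1.T) (h2 : ∀ x y, t2 x = some y ↔ (x, y) ∈ A2.T)
    (w : List α) (hw1 : t1 w ≠ none) (hw2 : t2 w ≠ none)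
    (hlen : pumpBound A1 A2 < w.length) :
    ∃ x y z : List α, x ++ y ++ z = w ∧ 1 ≤ y.length ∧
      ∃ a1 b1 c1 a2 b2 c2 : List β, ∀ k : ℕ,
        t1 (x ++ pw y k ++ z) = some (a1 ++ pw b1 k ++ c1) ∧
        t2 (x ++ pw y k ++ z) = some (a2 ++ pw b2 k ++ c2) := by
  classical
  obtain ⟨v1, hv1⟩ := Option.ne_none_iff_exists'.mp hw1
  obtain ⟨v2, hv2⟩ := Option.ne_none_iff_exists'.mp hw2
  obtain ⟨q01, qf1, y1, hI1, hF1, hrun1, hov1⟩ := (h1 w v1).mp hv1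
  obtain ⟨q02, qf2, y2, hI2, hF2, hrun2, hov2⟩ := (h2 w v2).mp hv2
  obtain ⟨ts1, htr1, hin1, hout1⟩ := trace_of_run hrun1
  obtain ⟨ts2, htr2, hin2, hout2⟩ := trace_of_run hrun2
  set n := w.length with hn
  have hcut1 : ∀ i, i < n → ∃ Ap tr Bs d, ts1 = Ap ++ tr :: Bs ∧ d < tr.2.1.length ∧
      i = (inps Ap).length + d := fun i hi => exists_cut ts1 i (by rw [hin1]; exact hi)
  have hcut2 : ∀ i, i < n → ∃ Ap tr Bs d, ts2 = Ap ++ tr :: Bs ∧ d < tr.2.1.length ∧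
      i = (inps Ap).length + d := fun i hi => exists_cut ts2 i (by rw [hin2]; exact hi)
  choose Ap1 tr1 Bs1 d1 hsp1 hdl1 hix1 using hcut1
  choose Ap2 tr2 Bs2 d2 hsp2 hdl2 hix2 using hcut2
  have h0n : 0 < n := by omega
  set F : ℕ → ((A1.Q × List α × List β × A1.Q) × ℕ) × ((A2.Q × List α × List β × A2.Q) × ℕ) :=
    fun i => if h : i < n then ((tr1 i h, d1 i h), (tr2 i h, d2 i h))
      else ((tr1 0 h0n, 0), (tr2 0 h0n, 0)) with hF
  have hmaps : ∀ i ∈ Finset.range n, F i ∈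
      (A1.finΔ.toFinset ×ˢ Finset.range (maxInp A1 + 1)) ×ˢ
      (A2.finΔ.toFinset ×ˢ Finset.range (maxInp A2 + 1)) := by
    intro i hi
    rw [Finset.mem_range] at hi
    have hΔ1 : tr1 i hi ∈ A1.Δ := mem_of_split htr1 (hsp1 i hi)
    have hΔ2 : tr2 i hi ∈ A2.Δ := mem_of_split htr2 (hsp2 i hi)
    have hd1 : d1 i hi < maxInp A1 + 1 := by
      have hsup := Finset.le_sup (f := fun tr : A1.Q × List α × List β × A1.Q => tr.2.1.length)
        (A1.finΔ.mem_toFinset.mpr hΔ1)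
      have hsup2 : (tr1 i hi).2.1.length ≤ maxInp A1 := hsup
      have := hdl1 i hi
      omega
    have hd2 : d2 i hi < maxInp A2 + 1 := by
      have hsup := Finset.le_sup (f := fun tr : A2.Q × List α × List β × A2.Q => tr.2.1.length)
        (A2.finΔ.mem_toFinset.mpr hΔ2)
      have hsup2 : (tr2 i hi).2.1.length ≤ maxInp A2 := hsup
      have := hdl2 i hi
      omega
    simp only [hF, dif_pos hi, Finset.mem_product, Finset.mem_range]
    exact ⟨⟨A1.finΔ.mem_toFinset.mpr hΔ1, hd1⟩, A2.finΔ.mem_toFinset.mpr hΔ2, hd2⟩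
  obtain ⟨i0, hi0, j0, hj0, hne, hFeq0⟩ :=
    Finset.exists_ne_map_eq_of_card_lt_of_maps_to
      (by simpa [pumpBound, Finset.card_range] using hlen) hmaps
  rw [Finset.mem_range] at hi0 hj0
  have hij' : ∃ i j, i < j ∧ j < n ∧ F i = F j := by
    rcases Nat.lt_trichotomy i0 j0 with h | h | h
    · exact ⟨i0, j0, h, hj0, hFeq0⟩
    · exact absurd h hne
    · exact ⟨j0, i0, h, hi0, hFeq0.symm⟩
  obtain ⟨i, j, hij, hjn, hFeq⟩ := hij'
  have hin : i < n := by omega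
  simp only [hF, dif_pos hin, dif_pos hjn, Prod.mk.injEq] at hFeq
  obtain ⟨⟨he1, he2⟩, he3, he4⟩ := hFeq
  -- machine 1
  have hspj1 : ts1 = Ap1 j hjn ++ tr1 i hin :: Bs1 j hjn := by rw [he1]; exact hsp1 j hjn
  have hxj1 : j = (inps (Ap1 j hjn)).length + d1 i hin := by rw [he2]; exact hix1 j hjn
  obtain ⟨x1, yy1, z1, a1, b1, c1, hx1len, hy1len, hxyz1, hfam1⟩ :=
    one_machine h1 hI1 hF1 htr1 hij (hsp1 i hin) hspj1 (hdl1 i hin) (hix1 i hin) hxj1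
  -- machine 2
  have hspj2 : ts2 = Ap2 j hjn ++ tr2 i hin :: Bs2 j hjn := by rw [he3]; exact hsp2 j hjn
  have hxj2 : j = (inps (Ap2 j hjn)).length + d2 i hin := by rw [he4]; exact hix2 j hjn
  obtain ⟨x2, yy2, z2, a2, b2, c2, hx2len, hy2len, hxyz2, hfam2⟩ :=
    one_machine h2 hI2 hF2 htr2 hij (hsp2 i hin) hspj2 (hdl2 i hin) (hix2 i hin) hxj2
  rw [hin1] at hxyz1
  rw [hin2] at hxyz2
  have heqw : x1 ++ (yy1 ++ z1) = x2 ++ (yy2 ++ z2) := by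
    rw [← List.append_assoc, ← List.append_assoc, hxyz1, hxyz2]
  obtain ⟨hx12, hrest⟩ := List.append_inj heqw (hx1len.trans hx2len.symm)
  obtain ⟨hy12, hz12⟩ := List.append_inj hrest (hy1len.trans hy2len.symm)
  subst hx12
  subst hy12
  subst hz12
  exact ⟨x1, yy1, z1, hxyz1, by omega, a1, b1, c1, a2, b2, c2,
    fun k => ⟨hfam1 k, hfam2 k⟩⟩

end Stmt12Aux

/-- short witnesses: if two rational functions `t₁, t₂` are not
adjacent then there are `x, y, z` with `x y^k z` in both domains and
`‖t₁(x y^k z), t₂(x y^k z)‖ = Ω(k)`; in particular, for each `k` there is a short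
word on which the two functions are at distance at least `k`. -/
theorem statement12 {α β : Type} [Fintype α] [Fintype β] [DecidableEq β]
    (t₁ t₂ : List α → Option (List β))
    (h₁ : IsRationalFun t₁) (h₂ : IsRationalFun t₂)
    (hna : ¬ Adjacent t₁ t₂) :
    (∃ x y z : List α,
      (∀ k : ℕ, x ++ (List.replicate k y).flatten ++ z ∈ pdom t₁ ∧
                x ++ (List.replicate k y).flatten ++ z ∈ pdom t₂) ∧
      ∃ c : ℝ, 0 < c ∧ ∃ k₀ : ℕ, ∀ k : ℕ, k₀ ≤ k →
        c * (k : ℝ) ≤ (suffDist (pval t₁ (x ++ (List.replicate k y).flatten ++ z))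
                                (pval t₂ (x ++ (List.replicate k y).flatten ++ z)) : ℝ)) ∧
    ∃ C : ℕ, ∀ k : ℕ, ∃ x : List α, x ∈ pdom t₁ ∧ x ∈ pdom t₂ ∧
      x.length ≤ C * (k + 1) ∧ k ≤ suffDist (pval t₁ x) (pval t₂ x) := by
  classical
  obtain ⟨A1, hA1⟩ := h₁
  obtain ⟨A2, hA2⟩ := h₂
  set N := Stmt12Aux.pumpBound A1 A2 with hN
  have hfin : {l : List α | l.length ≤ N}.Finite := List.finite_length_le α N
  obtain ⟨B, hB⟩ : ∃ B : ℕ, ∀ w : List α, w.length ≤ N →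
      suffDist (pval t₁ w) (pval t₂ w) ≤ B := by
    obtain ⟨B, hB⟩ := (hfin.image fun w => suffDist (pval t₁ w) (pval t₂ w)).bddAbove
    exact ⟨B, fun w hw => hB ⟨w, hw, rfl⟩⟩
  have hinf : {d : ℕ | ∃ w : List α, w ∈ pdom t₁ ∧ w ∈ pdom t₂ ∧
      d = suffDist (pval t₁ w) (pval t₂ w)}.Infinite := hna
  obtain ⟨dB, hdmem, hdgt⟩ := hinf.exists_gt B
  obtain ⟨w0, hw01, hw02, hw0d⟩ := hdmem
  have hex : ∃ m : ℕ, ∃ w : List α, w ∈ pdom t₁ ∧ w ∈ pdom t₂ ∧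
      B < suffDist (pval t₁ w) (pval t₂ w) ∧ w.length = m :=
    ⟨w0.length, w0, hw01, hw02, by rw [← hw0d]; exact hdgt, rfl⟩
  obtain ⟨w, hw1, hw2, hwd, hwlen⟩ := Nat.find_spec hex
  have hmin : ∀ w' : List α, w' ∈ pdom t₁ → w' ∈ pdom t₂ →
      B < suffDist (pval t₁ w') (pval t₂ w') → Nat.find hex ≤ w'.length := by
    intro w' ha hb hc
    by_contra hcon
    exact Nat.find_min hex (by omega) ⟨w', ha, hb, hc, rfl⟩
  have hlong : N < w.length := by
    by_contra hc
    push_neg at hc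
    have := hB w hc
    omega
  obtain ⟨x, y, z, hxyz, hy1, a1, b1, c1, a2, b2, c2, hfam⟩ :=
    Stmt12Aux.pair_pump A1 A2 t₁ t₂ hA1 hA2 w hw1 hw2 hlong
  have hmem1 : ∀ k, (x ++ Stmt12Aux.pw y k ++ z) ∈ pdom t₁ := by
    intro k
    simp only [pdom, Set.mem_setOf_eq]
    rw [(hfam k).1]
    simp
  have hmem2 : ∀ k, (x ++ Stmt12Aux.pw y k ++ z) ∈ pdom t₂ := by
    intro k
    simp only [pdom, Set.mem_setOf_eq]
    rw [(hfam k).2]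
    simp
  have hval1 : ∀ k, pval t₁ (x ++ Stmt12Aux.pw y k ++ z) = a1 ++ Stmt12Aux.pw b1 k ++ c1 := by
    intro k
    simp only [pval, (hfam k).1, Option.getD_some]
  have hval2 : ∀ k, pval t₂ (x ++ Stmt12Aux.pw y k ++ z) = a2 ++ Stmt12Aux.pw b2 k ++ c2 := by
    intro k
    simp only [pval, (hfam k).2, Option.getD_some]
  rcases Stmt12Aux.suff_dichotomy a1 b1 c1 a2 b2 c2 with hconst | ⟨A, hgrow⟩
  · exfalso
    have hfam1 : x ++ Stmt12Aux.pw y 1 ++ z = w := by rw [Stmt12Aux.pw_one]; exact hxyz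
    have hfam0 : x ++ Stmt12Aux.pw y 0 ++ z = x ++ z := by rw [Stmt12Aux.pw_zero]; simp
    have hd0 : suffDist (pval t₁ (x ++ z)) (pval t₂ (x ++ z)) =
        suffDist (pval t₁ w) (pval t₂ w) := by
      rw [← hfam0, ← hfam1, hval1 0, hval2 0, hval1 1, hval2 1]
      exact (hconst 1).symm
    have hmem01 : (x ++ z) ∈ pdom t₁ := hfam0 ▸ hmem1 0
    have hmem02 : (x ++ z) ∈ pdom t₂ := hfam0 ▸ hmem2 0
    have hge := hmin (x ++ z) hmem01 hmem02 (by rw [hd0]; exact hwd)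
    have hlw : x.length + y.length + z.length = w.length := by
      rw [← hxyz]; simp only [List.length_append]
    have hxz : (x ++ z).length = x.length + z.length := by simp
    omega
  · constructor
    · refine ⟨x, y, z, fun k => ?_, (1:ℝ)/2, by norm_num, 2*A, fun k hk => ?_⟩
      · rw [← Stmt12Aux.pw_def]
        exact ⟨hmem1 k, hmem2 k⟩
      · rw [← Stmt12Aux.pw_def, hval1 k, hval2 k]
        have h2 := hgrow (k - A)
        rw [show k - A + A = k by omega] at h2
        have h3 : k ≤ 2 * suffDist (a1 ++ Stmt12Aux.pw b1 k ++ c1)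
            (a2 ++ Stmt12Aux.pw b2 k ++ c2) := by omega
        have h4 : (k : ℝ) ≤ 2 * (suffDist (a1 ++ Stmt12Aux.pw b1 k ++ c1)
            (a2 ++ Stmt12Aux.pw b2 k ++ c2) : ℝ) := by exact_mod_cast h3
        linarith
    · refine ⟨x.length + z.length + (A+1) * y.length + 1, fun k => ?_⟩
      refine ⟨x ++ Stmt12Aux.pw y (k+A) ++ z, hmem1 (k+A), hmem2 (k+A), ?_, ?_⟩
      · have hlen : (x ++ Stmt12Aux.pw y (k+A) ++ z).length
            = x.length + (k+A) * y.length + z.length := by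
          simp [Stmt12Aux.length_pw]
          ring
        have hkA : k + A ≤ (A+1) * (k+1) := by
          have : (A+1) * (k+1) = A*k + A + k + 1 := by ring
          omega
        have hmul : (k+A) * y.length ≤ (A+1) * (k+1) * y.length :=
          Nat.mul_le_mul_right y.length hkA
        have hexp : (x.length + z.length + (A+1) * y.length + 1) * (k+1)
            = (x.length + z.length + 1) * (k+1) + (A+1) * (k+1) * y.length := by ring
        have hone : x.length + z.length + 1 ≤ (x.length + z.length + 1) * (k+1) :=
          Nat.le_mul_of_pos_right _ (by omega)
        omega
      · rw [hval1 (k+A), hval2 (k+A)]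
        exact hgrow k
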